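/- Let p = 2, e ≥ 1, q = 2^e, l ≥ 1, and f : F_q^2 → F_q^l. Then for every vertex (u, v) of D(q;f), the vertex set of the strong component of D(q;f) containing (u, v) equals { (a, v + h(a) + g(u) + W₀) : a ∈ F_q } ∪ { (a, v + h(a) + g(u) + f(0,0) + W₀) : a ∈ F_q }, which equals { (a, v + h(a) + g(u) + W) : a ∈ F_q }, where W = W₀ + Span_{F_2}{f(0,0)}. -/

import Mathlib

open Relation

/-- For `q = 2^e`, the vertex set of the strong component of `D(q;f)`
containing `(u,v)` equals
`{(a, v + h(a) + g(u) + W₀) : a} ∪ {(a, v + h(a) + g(u) + f(0,0) + W₀) : a}`,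
which equals `{(a, v + h(a) + g(u) + W) : a}` with `W = W₀ + Span_{F_2}{f(0,0)}`. -/
theorem stmt_11 {e l : ℕ} (he : 1 ≤ e) (hl : 1 ≤ l)
    {F : Type*} [Field F] [Fintype F] [Algebra (ZMod 2) F]
    (hF : Fintype.card F = 2 ^ e)
    (f : F × F → Fin l → F)
    (f₀ : F × F → Fin l → F) (hf₀ : ∀ xy, f₀ xy = f xy - f (0, 0))
    (g h : F → Fin l → F) (hg : ∀ t, g t = f (t, 0) - f (0, 0))
    (hh : ∀ t, h t = f (0, t) - f (0, 0))
    (W₀ : Submodule (ZMod 2) (Fin l → F))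
    (hW₀ : W₀ = Submodule.span (ZMod 2)
      (Set.range fun xy : F × F => f₀ xy - g xy.2 - h xy.1))
    (W : Submodule (ZMod 2) (Fin l → F))
    (hW : W = W₀ ⊔ Submodule.span (ZMod 2) {f (0, 0)})
    (u : F) (v : Fin l → F) :
    {z : F × (Fin l → F) |
        ReflTransGen (fun z w : F × (Fin l → F) => z.2 + w.2 = f (z.1, w.1)) (u, v) z ∧
        ReflTransGen (fun z w : F × (Fin l → F) => z.2 + w.2 = f (z.1, w.1)) z (u, v)} =
      {z : F × (Fin l → F) | ∃ a : F, ∃ w ∈ W₀, z = (a, v + h a + g u + w)} ∪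
      {z : F × (Fin l → F) | ∃ a : F, ∃ w ∈ W₀, z = (a, v + h a + g u + f (0, 0) + w)} ∧
    {z : F × (Fin l → F) | ∃ a : F, ∃ w ∈ W₀, z = (a, v + h a + g u + w)} ∪
      {z : F × (Fin l → F) | ∃ a : F, ∃ w ∈ W₀, z = (a, v + h a + g u + f (0, 0) + w)} =
      {z : F × (Fin l → F) | ∃ a : F, ∃ w ∈ W, z = (a, v + h a + g u + w)} := by
  classical
  -- characteristic 2 facts
  haveI : CharP F 2 := charP_of_injective_algebraMap (algebraMap (ZMod 2) F).injective 2
  have htwoF : (2 : F) = 0 := CharP.cast_eq_zero F 2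
  have hxx : ∀ x : Fin l → F, x + x = 0 := fun x => by
    rw [← two_smul F x, htwoF, zero_smul]
  have hkey : ∀ x y d : Fin l → F, x = y + (d + d) → x = y := fun x y d hd => by
    rwa [hxx, add_zero] at hd
  have hcancel : ∀ x y : Fin l → F, x + (x + y) = y := fun x y => by
    rw [← add_assoc, hxx, zero_add]
  set Rel : F × (Fin l → F) → F × (Fin l → F) → Prop :=
    fun z w : F × (Fin l → F) => z.2 + w.2 = f (z.1, w.1) with hRel
  -- one step of the walk
  have hstep : ∀ (a b : F) (p : Fin l → F), ReflTransGen Rel (a, p) (b, p + f (a, b)) := by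
    intro a b p
    refine ReflTransGen.single ?_
    show p + (p + f (a, b)) = f (a, b)
    rw [hcancel]
  -- translation invariance
  have hshift : ∀ (c : Fin l → F) (z w : F × (Fin l → F)), ReflTransGen Rel z w →
      ReflTransGen Rel (z.1, z.2 + c) (w.1, w.2 + c) := by
    intro c z w hzw
    induction hzw with
    | refl => exact ReflTransGen.refl
    | @tail m w' hmz step ih =>
        refine ih.tail ?_
        have step' : m.2 + w'.2 = f (m.1, w'.1) := step
        show m.2 + c + (w'.2 + c) = f (m.1, w'.1)
        rw [← step']
        exact hkey _ _ c (by abel)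
  -- splitting f
  have hfsplit : ∀ a b : F, f (a, b) = (f₀ (a, b) - g b - h a) + g b + h a + f (0, 0) :=
    fun a b => by rw [hf₀]; abel
  -- generators of W₀
  have hgh : ∀ t : F, h t + g t ∈ W₀ := by
    intro t
    rw [hW₀]
    refine Submodule.subset_span ⟨(0, t), ?_⟩
    show f₀ (0, t) - g t - h 0 = h t + g t
    simp only [hf₀, hg, hh]
    exact hkey _ _ (f (0, 0) - f (t, 0)) (by abel)
  have hW₀' : ∀ x y : F, f₀ (x, y) - g y - h x ∈ W₀ := fun x y => by
    rw [hW₀]; exact Submodule.subset_span ⟨(x, y), rfl⟩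
  -- closed 8-step walk realizing a generator
  have hgen : ∀ (a x y : F) (p : Fin l → F),
      ReflTransGen Rel (a, p) (a, p + (f₀ (x, y) - g y - h x)) := by
    intro a x y p
    have wlk := ((((((((hstep a 0 p).trans (hstep 0 a _)).trans (hstep a 0 _)).trans
      (hstep 0 x _)).trans (hstep x y _)).trans (hstep y 0 _)).trans
      (hstep 0 0 _)).trans (hstep 0 a _))
    have e : p + f (a, 0) + f (0, a) + f (a, 0) + f (0, x) + f (x, y) + f (y, 0)
        + f (0, 0) + f (0, a) = p + (f₀ (x, y) - g y - h x) := by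
      simp only [hf₀, hg, hh]
      exact hkey _ _ (f (a, 0) + f (0, a) + f (0, x) + f (y, 0)) (by abel)
    rwa [e] at wlk
  -- we can add any element of W₀ by a closed walk
  have hspan : ∀ (a : F) (p : Fin l → F) (w : Fin l → F), w ∈ W₀ →
      ReflTransGen Rel (a, p) (a, p + w) := by
    intro a p w hw
    rw [hW₀] at hw
    induction hw using Submodule.span_induction with
    | mem x hx =>
        obtain ⟨⟨x1, y1⟩, rfl⟩ := hx
        exact hgen a x1 y1 p
    | zero => rw [add_zero]
    | add x y hx hy ihx ihy =>
        have s' : ReflTransGen Rel (a, p + x) (a, p + y + x) := hshift x (a, p) (a, p + y) ihy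
        have t' := ihx.trans s'
        rwa [show p + y + x = p + (x + y) from by abel] at t'
    | smul c x hx ih =>
        rcases (by decide : ∀ c : ZMod 2, c = 0 ∨ c = 1) c with rfl | rfl
        · rw [zero_smul, add_zero]
        · rwa [one_smul]
  -- two and three step walks
  have htwostep : ∀ (a b : F) (p : Fin l → F),
      ReflTransGen Rel (a, p) (b, p + h b + g a) := by
    intro a b p
    have wlk := (hstep a 0 p).trans (hstep 0 b _)
    have e : p + f (a, 0) + f (0, b) = p + h b + g a := by
      simp only [hg, hh]
      exact hkey _ _ (f (0, 0)) (by abel)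
    rwa [e] at wlk
  have hthreestep : ∀ (a b : F) (p : Fin l → F),
      ReflTransGen Rel (a, p) (b, p + h b + g a + f (0, 0)) := by
    intro a b p
    have wlk := ((hstep a 0 p).trans (hstep 0 0 _)).trans (hstep 0 b _)
    have e : p + f (a, 0) + f (0, 0) + f (0, b) = p + h b + g a + f (0, 0) := by
      simp only [hg, hh]
      exact hkey _ _ (f (0, 0)) (by abel)
    rwa [e] at wlk
  have hreach1 : ∀ (a : F) (p : Fin l → F) (b : F) (w : Fin l → F), w ∈ W₀ →
      ReflTransGen Rel (a, p) (b, p + h b + g a + w) := by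
    intro a p b w hw
    have t' := (hspan a p w hw).trans (htwostep a b (p + w))
    rwa [show p + w + h b + g a = p + h b + g a + w from by abel] at t'
  have hreach2 : ∀ (a : F) (p : Fin l → F) (b : F) (w : Fin l → F), w ∈ W₀ →
      ReflTransGen Rel (a, p) (b, p + h b + g a + f (0, 0) + w) := by
    intro a p b w hw
    have t' := (hspan a p w hw).trans (hthreestep a b (p + w))
    rwa [show p + w + h b + g a + f (0, 0) = p + h b + g a + f (0, 0) + w from by abel] at t'
  -- forward invariance
  have hfw : ∀ z : F × (Fin l → F), ReflTransGen Rel (u, v) z →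
      (∃ a : F, ∃ w ∈ W₀, z = (a, v + h a + g u + w)) ∨
      (∃ a : F, ∃ w ∈ W₀, z = (a, v + h a + g u + f (0, 0) + w)) := by
    intro z hz
    induction hz with
    | refl =>
        refine Or.inl ⟨u, h u + g u, hgh u, Prod.ext_iff.mpr ⟨rfl, ?_⟩⟩
        exact (hkey _ v (h u + g u) (by abel)).symm
    | @tail m z' hmz step ih =>
        rcases ih with ⟨a, w, hw, hm⟩ | ⟨a, w, hw, hm⟩
        · subst hm
          have step' : (v + h a + g u + w) + z'.2 = f (a, z'.1) := step
          have hz2 : z'.2 = (v + h a + g u + w) + f (a, z'.1) := by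
            rw [← step', hcancel]
          refine Or.inr ⟨z'.1, w + (f₀ (a, z'.1) - g z'.1 - h a) + (h z'.1 + g z'.1),
            add_mem (add_mem hw (hW₀' a z'.1)) (hgh z'.1), ?_⟩
          refine Prod.ext_iff.mpr ⟨rfl, ?_⟩
          rw [hz2, hfsplit a z'.1]
          exact hkey _ _ (h a - h z'.1) (by dsimp only; abel)
        · subst hm
          have step' : (v + h a + g u + f (0, 0) + w) + z'.2 = f (a, z'.1) := step
          have hz2 : z'.2 = (v + h a + g u + f (0, 0) + w) + f (a, z'.1) := by
            rw [← step', hcancel]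
          refine Or.inl ⟨z'.1, w + (f₀ (a, z'.1) - g z'.1 - h a) + (h z'.1 + g z'.1),
            add_mem (add_mem hw (hW₀' a z'.1)) (hgh z'.1), ?_⟩
          refine Prod.ext_iff.mpr ⟨rfl, ?_⟩
          rw [hz2, hfsplit a z'.1]
          exact hkey _ _ (h a - h z'.1 + f (0, 0)) (by dsimp only; abel)
  refine ⟨?_, ?_⟩
  · ext z
    simp only [Set.mem_setOf_eq, Set.mem_union]
    constructor
    · rintro ⟨hz, -⟩
      exact hfw z hz
    · rintro (⟨a, w, hw, rfl⟩ | ⟨a, w, hw, rfl⟩)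
      · refine ⟨hreach1 u v a w hw, ?_⟩
        have hw' : w + (h a + g a) + (h u + g u) ∈ W₀ :=
          add_mem (add_mem hw (hgh a)) (hgh u)
        have hb := hreach1 a (v + h a + g u + w) u (w + (h a + g a) + (h u + g u)) hw'
        rwa [show v + h a + g u + w + h u + g a + (w + (h a + g a) + (h u + g u)) = v from
          hkey _ _ (h a + g u + w + h u + g a) (by abel)] at hb
      · refine ⟨hreach2 u v a w hw, ?_⟩
        have hw' : w + (h a + g a) + (h u + g u) ∈ W₀ :=
          add_mem (add_mem hw (hgh a)) (hgh u)
        have hb := hreach2 a (v + h a + g u + f (0, 0) + w) u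
          (w + (h a + g a) + (h u + g u)) hw'
        rwa [show v + h a + g u + f (0, 0) + w + h u + g a + f (0, 0) +
            (w + (h a + g a) + (h u + g u)) = v from
          hkey _ _ (h a + g u + f (0, 0) + w + h u + g a) (by abel)] at hb
  · ext z
    simp only [Set.mem_union, Set.mem_setOf_eq]
    constructor
    · rintro (⟨a, w, hw, rfl⟩ | ⟨a, w, hw, rfl⟩)
      · exact ⟨a, w, hW ▸ Submodule.mem_sup_left hw, rfl⟩
      · refine ⟨a, f (0, 0) + w, ?_, ?_⟩
        · exact hW ▸ add_mem (Submodule.mem_sup_right (Submodule.mem_span_singleton_self _))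
            (Submodule.mem_sup_left hw)
        · rw [show v + h a + g u + (f (0, 0) + w) = v + h a + g u + f (0, 0) + w from by abel]
    · rintro ⟨a, w, hwmem, rfl⟩
      rw [hW, Submodule.mem_sup] at hwmem
      obtain ⟨w₀, hw₀, w₁, hw₁, rfl⟩ := hwmem
      rw [Submodule.mem_span_singleton] at hw₁
      obtain ⟨c, rfl⟩ := hw₁
      rcases (by decide : ∀ c : ZMod 2, c = 0 ∨ c = 1) c with rfl | rfl
      · exact Or.inl ⟨a, w₀, hw₀, by rw [zero_smul, add_zero]⟩
      · refine Or.inr ⟨a, w₀, hw₀, ?_⟩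
        rw [one_smul, show v + h a + g u + (w₀ + f (0, 0)) =
          v + h a + g u + f (0, 0) + w₀ from by abel]
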